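/- First-order decomposition of the Boltzmann–Gibbs update: for bounded measurable G > 0 on E, probability measures μ, η on E with μ(G), η(G) > 0, and Φ(ν) := Ψ_G(ν) (the G-reweighting of ν), one has for every bounded measurable f: [Φ(μ) − Φ(η)](f) = (μ − η)(D_η f) + R(μ, η)(f), where G_η := G/η(G), D_η(f)(x) := G_η(x)·(f(x) − Φ(η)(f)), and R(μ,η)(f) := −(1/μ(G_η)) (μ−η)(G_η) · (μ−η)(D_η f). -/

import Mathlib

open MeasureTheory Real

/-- First-order decomposition of the Boltzmann–Gibbs update: with
`Φ(ν)(f) = ν(fG)/ν(G)`, `G_η = G/η(G)`, `D_η(f)(x) = G_η(x)(f(x) − Φ(η)(f))` and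
`R(μ,η)(f) = −(μ−η)(G_η)·(μ−η)(D_η f)/μ(G_η)`, one has
`[Φ(μ) − Φ(η)](f) = (μ−η)(D_η f) + R(μ,η)(f)`. -/
theorem boltzmann_gibbs_first_order_decomposition
    {E : Type*} [MeasurableSpace E] (μ η : Measure E)
    [IsProbabilityMeasure μ] [IsProbabilityMeasure η]
    (G : E → ℝ) (hGmeas : Measurable G) (hGpos : ∀ x, 0 < G x)
    (hGbdd : ∃ C, ∀ x, G x ≤ C)
    (hμG : 0 < ∫ x, G x ∂μ) (hηG : 0 < ∫ x, G x ∂η)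
    (f : E → ℝ) (hfmeas : Measurable f) (hfbdd : ∃ C, ∀ x, |f x| ≤ C) :
    (∫ x, f x * G x ∂μ) / (∫ x, G x ∂μ) - (∫ x, f x * G x ∂η) / (∫ x, G x ∂η)
      = ((∫ x, (G x / ∫ y, G y ∂η) *
            (f x - (∫ y, f y * G y ∂η) / (∫ y, G y ∂η)) ∂μ)
          - ∫ x, (G x / ∫ y, G y ∂η) *
            (f x - (∫ y, f y * G y ∂η) / (∫ y, G y ∂η)) ∂η)
        + (-(1 / ∫ x, (G x / ∫ y, G y ∂η) ∂μ)
          * ((∫ x, (G x / ∫ y, G y ∂η) ∂μ) - ∫ x, (G x / ∫ y, G y ∂η) ∂η)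
          * ((∫ x, (G x / ∫ y, G y ∂η) *
                (f x - (∫ y, f y * G y ∂η) / (∫ y, G y ∂η)) ∂μ)
            - ∫ x, (G x / ∫ y, G y ∂η) *
                (f x - (∫ y, f y * G y ∂η) / (∫ y, G y ∂η)) ∂η)) := by
  obtain ⟨C, hC⟩ := hGbdd
  obtain ⟨D, hD⟩ := hfbdd
  -- integrability facts
  have hGint : ∀ (ν : Measure E) [IsProbabilityMeasure ν], Integrable G ν := by
    intro ν _
    refine (integrable_const C).mono' hGmeas.aestronglyMeasurable ?_
    filter_upwards with x
    rw [Real.norm_eq_abs, abs_of_pos (hGpos x)]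
    exact hC x
  have hfGint : ∀ (ν : Measure E) [IsProbabilityMeasure ν],
      Integrable (fun x => f x * G x) ν := by
    intro ν _
    refine (integrable_const (D * C)).mono'
      (hfmeas.mul hGmeas).aestronglyMeasurable ?_
    filter_upwards with x
    rw [Real.norm_eq_abs, abs_mul, abs_of_pos (hGpos x)]
    have h0 : 0 ≤ |f x| := abs_nonneg _
    exact mul_le_mul (hD x) (hC x) (hGpos x).le ((h0.trans (hD x)))
  set a := ∫ x, G x ∂μ with ha
  set b := ∫ x, G x ∂η with hb
  set c := ∫ x, f x * G x ∂μ with hc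
  set d := ∫ x, f x * G x ∂η with hd
  have hbne : b ≠ 0 := hηG.ne'
  have hane : a ≠ 0 := hμG.ne'
  -- compute the integrals of G_η
  have hGdiv : ∀ (ν : Measure E), (∫ x, G x / b ∂ν) = (∫ x, G x ∂ν) / b := by
    intro ν; exact integral_div b G
  -- compute the integrals of D_η f
  have hkey : ∀ (ν : Measure E) [IsProbabilityMeasure ν],
      (∫ x, (G x / b) * (f x - d / b) ∂ν)
        = (∫ x, f x * G x ∂ν) / b - (d / (b * b)) * (∫ x, G x ∂ν) := by
    intro ν _
    have hexp : ∀ x, (G x / b) * (f x - d / b)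
        = (f x * G x) / b - (d / (b * b)) * G x := by
      intro x; field_simp
    rw [show (fun x => (G x / b) * (f x - d / b))
        = fun x => (f x * G x) / b - (d / (b * b)) * G x from funext hexp]
    rw [integral_sub ((hfGint ν).div_const b) ((hGint ν).const_mul _),
      integral_div, integral_const_mul]
  rw [hkey μ, hkey η, hGdiv μ, hGdiv η]
  simp only [← ha, ← hb, ← hc, ← hd]
  field_simp
  ring
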